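/- Define h(y) = 1/((4 + β + 3βy)(4 + 3βy)). Let β and x be real numbers, and set d = 3 + 3βx, y₁ = (1 − x)/d, y₂ = (2 + (β−1)x)/d, y₃ = (3 + (2β−1)x)/d. Assume d ≠ 0 and that 4 + β + 3βyᵢ ≠ 0 and 4 + 3βyᵢ ≠ 0 for i = 1,2,3, and that (4 + β + 3βx)(4 + 3βx) ≠ 0. Then h(x) = ((3+3β)/d²) · (h(y₁) + h(y₂) + h(y₃)). (This is the transfer-operator fixed-point equation showing that h is the invariant density of the jump transformation S of type [1,−1,1], Theorem 1(2).) -/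

import Mathlib

set_option maxHeartbeats 4000000 in
/-- Theorem 1(2), invariance of the density: the function
`h(y) = 1/((4 + β + 3βy)(4 + 3βy))` satisfies the transfer-operator
fixed-point equation for the jump transformation `S` of type `[1,−1,1]`. -/
theorem invariant_density_type_one_negone_one (β x : ℝ) :
    let h : ℝ → ℝ := fun y => 1 / ((4 + β + 3*β*y) * (4 + 3*β*y))
    let d : ℝ := 3 + 3*β*x
    let y₁ : ℝ := (1 - x) / d
    let y₂ : ℝ := (2 + (β - 1)*x) / d
    let y₃ : ℝ := (3 + (2*β - 1)*x) / d
    d ≠ 0 →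
    (4 + β + 3*β*y₁ ≠ 0 ∧ 4 + 3*β*y₁ ≠ 0) →
    (4 + β + 3*β*y₂ ≠ 0 ∧ 4 + 3*β*y₂ ≠ 0) →
    (4 + β + 3*β*y₃ ≠ 0 ∧ 4 + 3*β*y₃ ≠ 0) →
    (4 + β + 3*β*x) * (4 + 3*β*x) ≠ 0 →
    h x = ((3 + 3*β) / d^2) * (h y₁ + h y₂ + h y₃) := by
  intro h d y₁ y₂ y₃ hd h1 h2 h3 hx
  obtain ⟨h1a, h1b⟩ := h1
  obtain ⟨h2a, h2b⟩ := h2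
  obtain ⟨h3a, h3b⟩ := h3
  simp only [h, d, y₁, y₂, y₃] at *
  have hd1 : 1 + β*x ≠ 0 := by intro h0; apply hd; linear_combination 3*h0
  have e1a : (4 + β)*(3 + 3*β*x) + 3*β*(1 - x) ≠ 0 := by
    intro hc; apply h1a; field_simp; linear_combination (1/3)*hc
  have e1b : 4*(3 + 3*β*x) + 3*β*(1 - x) ≠ 0 := by
    intro hc; apply h1b; field_simp; linear_combination (1/3)*hc
  have e2a : (4 + β)*(3 + 3*β*x) + 3*β*(2 + (β - 1)*x) ≠ 0 := by
    intro hc; apply h2a; field_simp; linear_combination (1/3)*hc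
  have e2b : 4*(3 + 3*β*x) + 3*β*(2 + (β - 1)*x) ≠ 0 := by
    intro hc; apply h2b; field_simp; linear_combination (1/3)*hc
  have e3a : (4 + β)*(3 + 3*β*x) + 3*β*(3 + (2*β - 1)*x) ≠ 0 := by
    intro hc; apply h3a; field_simp; linear_combination (1/3)*hc
  have e3b : 4*(3 + 3*β*x) + 3*β*(3 + (2*β - 1)*x) ≠ 0 := by
    intro hc; apply h3b; field_simp; linear_combination (1/3)*hc
  have r1 : 4 + β + 3*β*((1 - x)/(3 + 3*β*x)) = ((4 + β)*(3 + 3*β*x) + 3*β*(1 - x))/(3 + 3*β*x) := by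
    field_simp
  have s1 : 4 + 3*β*((1 - x)/(3 + 3*β*x)) = (4*(3 + 3*β*x) + 3*β*(1 - x))/(3 + 3*β*x) := by
    field_simp
  have r2 : 4 + β + 3*β*((2 + (β - 1)*x)/(3 + 3*β*x)) = ((4 + β)*(3 + 3*β*x) + 3*β*(2 + (β - 1)*x))/(3 + 3*β*x) := by
    field_simp
  have s2 : 4 + 3*β*((2 + (β - 1)*x)/(3 + 3*β*x)) = (4*(3 + 3*β*x) + 3*β*(2 + (β - 1)*x))/(3 + 3*β*x) := by
    field_simp
  have r3 : 4 + β + 3*β*((3 + (2*β - 1)*x)/(3 + 3*β*x)) = ((4 + β)*(3 + 3*β*x) + 3*β*(3 + (2*β - 1)*x))/(3 + 3*β*x) := by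
    field_simp
  have s3 : 4 + 3*β*((3 + (2*β - 1)*x)/(3 + 3*β*x)) = (4*(3 + 3*β*x) + 3*β*(3 + (2*β - 1)*x))/(3 + 3*β*x) := by
    field_simp
  rw [r1, s1, r2, s2, r3, s3]
  rw [div_mul_div_comm, div_mul_div_comm, div_mul_div_comm, one_div_div, one_div_div, one_div_div]
  rw [div_add_div _ _ (mul_ne_zero e1a e1b) (mul_ne_zero e2a e2b),
      div_add_div _ _ (mul_ne_zero (mul_ne_zero e1a e1b) (mul_ne_zero e2a e2b)) (mul_ne_zero e3a e3b)]
  rw [div_mul_div_comm]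
  rw [div_eq_div_iff hx (mul_ne_zero (pow_ne_zero 2 hd)
    (mul_ne_zero (mul_ne_zero (mul_ne_zero e1a e1b) (mul_ne_zero e2a e2b)) (mul_ne_zero e3a e3b)))]
  ring
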